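/- Let ζ(x,t) = [[0, e^{−iv/2}],[e^{iv/2}, 0]] for a real-valued C² function v, and define G = (1/4)(iλζ + v_t j − (i/λ) J ζ J) and F = −(1/4)(λζ + v_x j + (1/λ) J ζ J), where j = diag(1,−1) and J = [[0,1],[1,0]]. Then the zero curvature equation G_t − F_x + [G, F] = 0 holds for all λ ≠ 0 if and only if v satisfies the elliptic sine-Gordon equation v_tt + v_xx = sin v. -/

import Mathlib

open Matrix

private lemma aux_d1t (v : ℝ → ℝ → ℝ) (hv : ContDiff ℝ 2 (Function.uncurry v)) (x t : ℝ) :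
    HasDerivAt (fun s => v x s) (deriv (fun s => v x s) t) t := by
  have hd : Differentiable ℝ (Function.uncurry v) := hv.differentiable (by norm_num)
  exact ((hd (x, t)).comp t
    ((differentiableAt_const x).prodMk differentiableAt_id)).hasDerivAt

private lemma aux_d1x (v : ℝ → ℝ → ℝ) (hv : ContDiff ℝ 2 (Function.uncurry v)) (x t : ℝ) :
    HasDerivAt (fun s => v s t) (deriv (fun s => v s t) x) x := by
  have hd : Differentiable ℝ (Function.uncurry v) := hv.differentiable (by norm_num)
  exact ((hd (x, t)).comp x
    (differentiableAt_id.prodMk (differentiableAt_const t))).hasDerivAt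

private lemma aux_d2t (v : ℝ → ℝ → ℝ) (hv : ContDiff ℝ 2 (Function.uncurry v)) (x t : ℝ) :
    HasDerivAt (fun s => deriv (fun s' => v x s') s)
      (deriv (fun s => deriv (fun s' => v x s') s) t) t := by
  have hd : Differentiable ℝ (Function.uncurry v) := hv.differentiable (by norm_num)
  have hf : ContDiff ℝ 1 (fderiv ℝ (Function.uncurry v)) := hv.fderiv_right (by norm_num)
  have heq : (fun s => deriv (fun s' => v x s') s)
      = fun s => fderiv ℝ (Function.uncurry v) (x, s) (0, 1) := by
    funext s
    have h1 : HasDerivAt (fun s' : ℝ => (x, s')) ((0 : ℝ), (1 : ℝ)) s :=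
      (hasDerivAt_const s x).prodMk (hasDerivAt_id s)
    exact ((hd (x, s)).hasFDerivAt.comp_hasDerivAt s h1).deriv
  rw [heq]
  exact ((((hf.differentiable one_ne_zero) (x, t)).comp t
    ((differentiableAt_const x).prodMk differentiableAt_id)).clm_apply
    (differentiableAt_const _)).hasDerivAt

private lemma aux_d2x (v : ℝ → ℝ → ℝ) (hv : ContDiff ℝ 2 (Function.uncurry v)) (x t : ℝ) :
    HasDerivAt (fun s => deriv (fun s' => v s' t) s)
      (deriv (fun s => deriv (fun s' => v s' t) s) x) x := by
  have hd : Differentiable ℝ (Function.uncurry v) := hv.differentiable (by norm_num)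
  have hf : ContDiff ℝ 1 (fderiv ℝ (Function.uncurry v)) := hv.fderiv_right (by norm_num)
  have heq : (fun s => deriv (fun s' => v s' t) s)
      = fun s => fderiv ℝ (Function.uncurry v) (s, t) (1, 0) := by
    funext s
    have h1 : HasDerivAt (fun s' : ℝ => (s', t)) ((1 : ℝ), (0 : ℝ)) s :=
      (hasDerivAt_id s).prodMk (hasDerivAt_const s t)
    exact ((hd (s, t)).hasFDerivAt.comp_hasDerivAt s h1).deriv
  rw [heq]
  exact ((((hf.differentiable one_ne_zero) (x, t)).comp x
    (differentiableAt_id.prodMk (differentiableAt_const t))).clm_apply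
    (differentiableAt_const _)).hasDerivAt

private lemma aux_exp (f : ℝ → ℝ) (u t : ℝ) (hf : HasDerivAt f u t) (c : ℂ) :
    HasDerivAt (fun s => Complex.exp (c * (f s : ℂ) / 2))
      (Complex.exp (c * (f t : ℂ) / 2) * (c * (u : ℂ) / 2)) t :=
  ((hf.ofReal_comp.const_mul c).div_const 2).cexp

set_option maxHeartbeats 1600000 in
/-- Zero curvature representation of the elliptic sine-Gordon equation:
with ζ = [[0, e^{−iv/2}],[e^{iv/2}, 0]], G = (1/4)(iλζ + v_t j − (i/λ)JζJ),
F = −(1/4)(λζ + v_x j + (1/λ)JζJ), the equation G_t − F_x + [G,F] = 0 holds for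
all λ ≠ 0 iff v_tt + v_xx = sin v. -/
theorem stmt_14 (v : ℝ → ℝ → ℝ)
    (hv : ContDiff ℝ 2 (Function.uncurry v))
    (jm Jm : Matrix (Fin 2) (Fin 2) ℂ)
    (hjm : jm = !![1, 0; 0, -1]) (hJm : Jm = !![0, 1; 1, 0])
    (ζ : ℝ → ℝ → Matrix (Fin 2) (Fin 2) ℂ)
    (hζ : ∀ x t, ζ x t = !![0, Complex.exp (-Complex.I * (v x t : ℂ) / 2);
      Complex.exp (Complex.I * (v x t : ℂ) / 2), 0])
    (G F : ℝ → ℝ → ℂ → Matrix (Fin 2) (Fin 2) ℂ)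
    (hG : ∀ x t lam, G x t lam =
      (Complex.I * lam / 4) • ζ x t
      + (((deriv (fun s => v x s) t : ℝ) : ℂ) / 4) • jm
      - (Complex.I / (4 * lam)) • (Jm * ζ x t * Jm))
    (hF : ∀ x t lam, F x t lam =
      -((lam / 4) • ζ x t
        + (((deriv (fun s => v s t) x : ℝ) : ℂ) / 4) • jm
        + ((1 : ℂ) / (4 * lam)) • (Jm * ζ x t * Jm))) :
    (∀ lam : ℂ, lam ≠ 0 → ∀ x t : ℝ,
      (Matrix.of fun i j => deriv (fun s => G x s lam i j) t)
        - (Matrix.of fun i j => deriv (fun s => F s t lam i j) x)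
        + (G x t lam * F x t lam - F x t lam * G x t lam) = 0)
    ↔ (∀ x t : ℝ,
      deriv (fun s => deriv (fun s' => v x s') s) t
        + deriv (fun s => deriv (fun s' => v s' t) s) x
      = Real.sin (v x t)) := by
  have hJζJ : ∀ x t, Jm * ζ x t * Jm = !![0, Complex.exp (Complex.I * (v x t : ℂ) / 2);
      Complex.exp (-Complex.I * (v x t : ℂ) / 2), 0] := by
    intro x t
    rw [hJm, hζ]
    ext i j
    fin_cases i <;> fin_cases j <;> simp [Matrix.mul_apply, Fin.sum_univ_two]
  have hGmat : ∀ (x t : ℝ) (lam : ℂ), G x t lam =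
      !![((deriv (fun s => v x s) t : ℝ) : ℂ) / 4,
        Complex.I * lam / 4 * Complex.exp (-Complex.I * (v x t : ℂ) / 2)
          - Complex.I / (4 * lam) * Complex.exp (Complex.I * (v x t : ℂ) / 2);
        Complex.I * lam / 4 * Complex.exp (Complex.I * (v x t : ℂ) / 2)
          - Complex.I / (4 * lam) * Complex.exp (-Complex.I * (v x t : ℂ) / 2),
        -(((deriv (fun s => v x s) t : ℝ) : ℂ) / 4)] := by
    intro x t lam
    rw [hG, hJζJ, hζ, hjm]
    ext i j
    fin_cases i <;> fin_cases j <;> simp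
  have hFmat : ∀ (x t : ℝ) (lam : ℂ), F x t lam =
      !![-(((deriv (fun s => v s t) x : ℝ) : ℂ) / 4),
        -(lam / 4 * Complex.exp (-Complex.I * (v x t : ℂ) / 2)
          + 1 / (4 * lam) * Complex.exp (Complex.I * (v x t : ℂ) / 2));
        -(lam / 4 * Complex.exp (Complex.I * (v x t : ℂ) / 2)
          + 1 / (4 * lam) * Complex.exp (-Complex.I * (v x t : ℂ) / 2)),
        ((deriv (fun s => v s t) x : ℝ) : ℂ) / 4] := by
    intro x t lam
    rw [hF, hJζJ, hζ, hjm]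
    ext i j
    fin_cases i <;> fin_cases j <;> simp <;> ring
  have key : ∀ (lam : ℂ), lam ≠ 0 → ∀ x t : ℝ,
      (Matrix.of fun i j => deriv (fun s => G x s lam i j) t)
        - (Matrix.of fun i j => deriv (fun s => F s t lam i j) x)
        + (G x t lam * F x t lam - F x t lam * G x t lam)
      = (((deriv (fun s => deriv (fun s' => v x s') s) t
          + deriv (fun s => deriv (fun s' => v s' t) s) x
          - Real.sin (v x t) : ℝ) : ℂ) / 4) • jm := by
    intro lam hlam x t
    set a : ℂ := Complex.exp (-Complex.I * (v x t : ℂ) / 2) with ha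
    set b : ℂ := Complex.exp (Complex.I * (v x t : ℂ) / 2) with hb
    set vt : ℝ := deriv (fun s => v x s) t with hvt
    set vx : ℝ := deriv (fun s => v s t) x with hvx
    set vtt : ℝ := deriv (fun s => deriv (fun s' => v x s') s) t with hvtt
    set vxx : ℝ := deriv (fun s => deriv (fun s' => v s' t) s) x with hvxx
    have hkey : b * b - a * a = 2 * Complex.I * Complex.sin ((v x t : ℝ) : ℂ) := by
      rw [hb, ha, ← Complex.exp_add, ← Complex.exp_add, Complex.sin]
      ring_nf
      rw [Complex.I_sq]
      ring_nf
    have hinv : lam * lam⁻¹ = 1 := mul_inv_cancel₀ hlam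
    -- derivative of G in t
    have hGt : (Matrix.of fun i j => deriv (fun s => G x s lam i j) t) =
        !![((vtt : ℝ) : ℂ) / 4,
          Complex.I * lam / 4 * (a * (-Complex.I * (vt : ℂ) / 2))
            - Complex.I / (4 * lam) * (b * (Complex.I * (vt : ℂ) / 2));
          Complex.I * lam / 4 * (b * (Complex.I * (vt : ℂ) / 2))
            - Complex.I / (4 * lam) * (a * (-Complex.I * (vt : ℂ) / 2)),
          -(((vtt : ℝ) : ℂ) / 4)] := by
      have hda := aux_exp (fun s => v x s) vt t (aux_d1t v hv x t) (-Complex.I)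
      have hdb := aux_exp (fun s => v x s) vt t (aux_d1t v hv x t) Complex.I
      have hdp : HasDerivAt (fun s => ((deriv (fun s' => v x s') s : ℝ) : ℂ) / 4)
          (((vtt : ℝ) : ℂ) / 4) t := ((aux_d2t v hv x t).ofReal_comp).div_const 4
      ext i j
      fin_cases i <;> fin_cases j
      · have he : (fun s => G x s lam 0 0) =
            fun s => ((deriv (fun s' => v x s') s : ℝ) : ℂ) / 4 := by
          funext s; rw [hGmat]; simp
        simp only [Fin.zero_eta, Fin.mk_one, Fin.isValue, Matrix.of_apply, he]
        simp [hdp.deriv]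
      · have he : (fun s => G x s lam 0 1) = fun s =>
            Complex.I * lam / 4 * Complex.exp (-Complex.I * (v x s : ℂ) / 2)
              - Complex.I / (4 * lam) * Complex.exp (Complex.I * (v x s : ℂ) / 2) := by
          funext s; rw [hGmat]; simp
        simp only [Fin.zero_eta, Fin.mk_one, Fin.isValue, Matrix.of_apply, he]
        rw [ha, hb]
        simpa using (show HasDerivAt (fun s =>
          Complex.I * lam / 4 * Complex.exp (-Complex.I * (v x s : ℂ) / 2)
            - Complex.I / (4 * lam) * Complex.exp (Complex.I * (v x s : ℂ) / 2)) _ t from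
          ((hda.const_mul (Complex.I * lam / 4)).sub
          (hdb.const_mul (Complex.I / (4 * lam))))).deriv
      · have he : (fun s => G x s lam 1 0) = fun s =>
            Complex.I * lam / 4 * Complex.exp (Complex.I * (v x s : ℂ) / 2)
              - Complex.I / (4 * lam) * Complex.exp (-Complex.I * (v x s : ℂ) / 2) := by
          funext s; rw [hGmat]; simp
        simp only [Fin.zero_eta, Fin.mk_one, Fin.isValue, Matrix.of_apply, he]
        rw [ha, hb]
        simpa using (show HasDerivAt (fun s =>
          Complex.I * lam / 4 * Complex.exp (Complex.I * (v x s : ℂ) / 2)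
            - Complex.I / (4 * lam) * Complex.exp (-Complex.I * (v x s : ℂ) / 2)) _ t from
          ((hdb.const_mul (Complex.I * lam / 4)).sub
          (hda.const_mul (Complex.I / (4 * lam))))).deriv
      · have he : (fun s => G x s lam 1 1) =
            fun s => -(((deriv (fun s' => v x s') s : ℝ) : ℂ) / 4) := by
          funext s; rw [hGmat]; simp
        simp only [Fin.zero_eta, Fin.mk_one, Fin.isValue, Matrix.of_apply, he]
        simp [hdp.neg.deriv, ((aux_d2t v hv x t).ofReal_comp).deriv, hvtt]
    -- derivative of F in x
    have hFx : (Matrix.of fun i j => deriv (fun s => F s t lam i j) x) =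
        !![-(((vxx : ℝ) : ℂ) / 4),
          -(lam / 4 * (a * (-Complex.I * (vx : ℂ) / 2))
            + 1 / (4 * lam) * (b * (Complex.I * (vx : ℂ) / 2)));
          -(lam / 4 * (b * (Complex.I * (vx : ℂ) / 2))
            + 1 / (4 * lam) * (a * (-Complex.I * (vx : ℂ) / 2))),
          ((vxx : ℝ) : ℂ) / 4] := by
      have hda := aux_exp (fun s => v s t) vx x (aux_d1x v hv x t) (-Complex.I)
      have hdb := aux_exp (fun s => v s t) vx x (aux_d1x v hv x t) Complex.I
      have hdp : HasDerivAt (fun s => ((deriv (fun s' => v s' t) s : ℝ) : ℂ) / 4)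
          (((vxx : ℝ) : ℂ) / 4) x := ((aux_d2x v hv x t).ofReal_comp).div_const 4
      ext i j
      fin_cases i <;> fin_cases j
      · have he : (fun s => F s t lam 0 0) =
            fun s => -(((deriv (fun s' => v s' t) s : ℝ) : ℂ) / 4) := by
          funext s; rw [hFmat]; simp
        simp only [Fin.zero_eta, Fin.mk_one, Fin.isValue, Matrix.of_apply, he]
        simp [hdp.neg.deriv, ((aux_d2x v hv x t).ofReal_comp).deriv, hvxx]
      · have he : (fun s => F s t lam 0 1) = fun s =>
            -(lam / 4 * Complex.exp (-Complex.I * (v s t : ℂ) / 2)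
              + 1 / (4 * lam) * Complex.exp (Complex.I * (v s t : ℂ) / 2)) := by
          funext s; rw [hFmat]; simp
        simp only [Fin.zero_eta, Fin.mk_one, Fin.isValue, Matrix.of_apply, he]
        rw [ha, hb]
        simpa using (show HasDerivAt (fun s =>
          -(lam / 4 * Complex.exp (-Complex.I * (v s t : ℂ) / 2)
            + 1 / (4 * lam) * Complex.exp (Complex.I * (v s t : ℂ) / 2))) _ x from
          ((hda.const_mul (lam / 4)).add
          (hdb.const_mul (1 / (4 * lam)))).neg).deriv
      · have he : (fun s => F s t lam 1 0) = fun s =>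
            -(lam / 4 * Complex.exp (Complex.I * (v s t : ℂ) / 2)
              + 1 / (4 * lam) * Complex.exp (-Complex.I * (v s t : ℂ) / 2)) := by
          funext s; rw [hFmat]; simp
        simp only [Fin.zero_eta, Fin.mk_one, Fin.isValue, Matrix.of_apply, he]
        rw [ha, hb]
        simpa using (show HasDerivAt (fun s =>
          -(lam / 4 * Complex.exp (Complex.I * (v s t : ℂ) / 2)
            + 1 / (4 * lam) * Complex.exp (-Complex.I * (v s t : ℂ) / 2))) _ x from
          ((hdb.const_mul (lam / 4)).add
          (hda.const_mul (1 / (4 * lam)))).neg).deriv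
      · have he : (fun s => F s t lam 1 1) =
            fun s => ((deriv (fun s' => v s' t) s : ℝ) : ℂ) / 4 := by
          funext s; rw [hFmat]; simp
        simp only [Fin.zero_eta, Fin.mk_one, Fin.isValue, Matrix.of_apply, he]
        simp [hdp.deriv]
    rw [hGt, hFx, hGmat, hFmat, hjm, ← ha, ← hb, ← hvt, ← hvx]
    ext i j
    fin_cases i <;> fin_cases j <;>
      simp [Matrix.mul_apply, Fin.sum_univ_two] <;> push_cast
    · linear_combination (Complex.I * lam * lam⁻¹ / 8) * hkey
        + (Complex.sin ((v x t : ℝ) : ℂ) * lam * lam⁻¹ / 4) * Complex.I_mul_I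
        - (Complex.sin ((v x t : ℝ) : ℂ) / 4) * hinv
    · linear_combination (-((vt : ℂ) * (lam * a + b / lam) / 8)) * Complex.I_mul_I
    · linear_combination ((vt : ℂ) * (lam * b + a / lam) / 8) * Complex.I_mul_I
    · linear_combination (-(Complex.I * lam * lam⁻¹ / 8)) * hkey
        - (Complex.sin ((v x t : ℝ) : ℂ) * lam * lam⁻¹ / 4) * Complex.I_mul_I
        + (Complex.sin ((v x t : ℝ) : ℂ) / 4) * hinv
  constructor
  · intro h x t
    have h1 := (key 1 one_ne_zero x t).symm.trans (h 1 one_ne_zero x t)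
    have h2 := congrFun (congrFun h1 0) 0
    rw [hjm] at h2
    simp at h2
    have h3 : (deriv (fun s => deriv (fun s' => v x s') s) t
        + deriv (fun s => deriv (fun s' => v s' t) s) x
        - Real.sin (v x t) : ℝ) = 0 := by exact_mod_cast h2
    linarith
  · intro h lam hlam x t
    rw [key lam hlam x t]
    have : (deriv (fun s => deriv (fun s' => v x s') s) t
        + deriv (fun s => deriv (fun s' => v s' t) s) x
        - Real.sin (v x t) : ℝ) = 0 := by
      have := h x t; linarith
    rw [this]
    simp
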